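/- The clustering is group fair if and only if F_0^T H = 0, where F_0 = G - 1_n z^T with z = (G^T 1_n)/n, and H is the cluster indicator matrix. -/
import Mathlib


open Matrix

theorem stmt5 (n k h : ℕ) (hn : 0 < n)
    (c : Fin n → Fin k) (hc : Function.Surjective c)
    (g : Fin n → Fin h) (hg : Function.Surjective g)
    (G : Matrix (Fin n) (Fin h) ℝ)
    (hG : ∀ i s, G i s = if g i = s then 1 else 0)
    (H : Matrix (Fin n) (Fin k) ℝ)
    (hH : ∀ i l, H i l = if c i = l then 1 else 0)
    (z : Fin h → ℝ) (hz : z = fun s => (Gᵀ.mulVec (fun _ => 1)) s / n)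
    (F0 : Matrix (Fin n) (Fin h) ℝ)
    (hF0 : ∀ i s, F0 i s = G i s - z s) :
    (∀ s l, ((Finset.univ.filter fun i => g i = s ∧ c i = l).card : ℝ) /
        ((Finset.univ.filter fun i => c i = l).card : ℝ) =
        ((Finset.univ.filter fun i => g i = s).card : ℝ) / n)
      ↔ F0ᵀ * H = 0 := by
  set A : Fin h → Fin k → ℝ :=
    fun s l => ((Finset.univ.filter fun i => g i = s ∧ c i = l).card : ℝ) with hA
  set B : Fin k → ℝ := fun l => ((Finset.univ.filter fun i => c i = l).card : ℝ) with hB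
  set D : Fin h → ℝ := fun s => ((Finset.univ.filter fun i => g i = s).card : ℝ) with hD
  have hBpos : ∀ l, 0 < B l := by
    intro l
    obtain ⟨i, hi⟩ := hc l
    have hmem : i ∈ Finset.univ.filter fun i => c i = l := by simp [hi]
    have hcard := Finset.card_pos.2 ⟨i, hmem⟩
    simp only [hB]
    exact_mod_cast hcard
  have hnpos : (0:ℝ) < n := by exact_mod_cast hn
  have hn' : (n:ℝ) ≠ 0 := hnpos.ne'
  have hzs : ∀ s, z s = D s / n := by
    intro s
    rw [hz]
    simp only [mulVec, dotProduct, transpose_apply]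
    congr 1
    simp only [hG, mul_one]
    rw [Finset.sum_boole]
  have hkey : ∀ s l, (F0ᵀ * H) s l = A s l - z s * B l := by
    intro s l
    rw [mul_apply]
    simp only [transpose_apply, hF0, hH, sub_mul]
    rw [Finset.sum_sub_distrib]
    congr 1
    · simp only [hG, ite_mul, one_mul, zero_mul, ← ite_and]
      rw [Finset.sum_boole]
    · rw [← Finset.mul_sum]
      congr 1
      rw [Finset.sum_boole]
  constructor
  · intro hf
    ext s l
    rw [hkey s l, hzs s]
    have hfs := hf s l
    have hB' : B l ≠ 0 := (hBpos l).ne'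
    rw [div_eq_div_iff hB' hn'] at hfs
    simp only [Matrix.zero_apply]
    field_simp
    linarith
  · intro hf s l
    have heq := congrFun (congrFun hf s) l
    rw [hkey s l, hzs s] at heq
    have hB' : B l ≠ 0 := (hBpos l).ne'
    simp only [Matrix.zero_apply] at heq
    rw [div_eq_div_iff hB' hn']
    field_simp at heq
    linarith
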